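/- arXiv:2110.08081 — 5 statements merged into one kernel-verified Lean document; each statement's English description precedes it below -/
import Mathlib

section
/- Let H be a complex Hilbert space, Q ∈ L(H) invertible with inverse R = Q⁻¹, and let Q₊ ∈ L(H) be a nonnegative selfadjoint operator with 0 ≤ Q₊ ≤ -Im(Q) (in the sense of quadratic forms). Then R* Q₊ R ≤ Im(R) and R Q₊ R* ≤ Im(R), where Im(T) = (T - T*)/(2i). -/
open ContinuousLinearMap

/-- quadratic estimates, Proposition 5.7. If `Q` is an invertible bounded
operator with inverse `R`, and `Q₊` is a nonnegative selfadjoint operator with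
`0 ≤ Q₊ ≤ -Im Q` as quadratic forms, then `R* Q₊ R ≤ Im R` and `R Q₊ R* ≤ Im R`. -/
theorem stmt_1 {H : Type*} [NormedAddCommGroup H] [InnerProductSpace ℂ H] [CompleteSpace H]
    (Q R Qp : H →L[ℂ] H)
    (hQR : Q.comp R = ContinuousLinearMap.id ℂ H)
    (hRQ : R.comp Q = ContinuousLinearMap.id ℂ H)
    (hsa : IsSelfAdjoint Qp)
    (hpos : ∀ φ : H, 0 ≤ (inner ℂ (Qp φ) φ : ℂ).re)
    (hdom : ∀ φ : H, (inner ℂ (Qp φ) φ : ℂ).re ≤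
      -(inner ℂ ((((2 * Complex.I)⁻¹ • (Q - ContinuousLinearMap.adjoint Q)) : H →L[ℂ] H) φ) φ
          : ℂ).re) :
    (∀ φ : H, (inner ℂ (Qp (R φ)) (R φ) : ℂ).re ≤
        (inner ℂ ((((2 * Complex.I)⁻¹ • (R - ContinuousLinearMap.adjoint R)) : H →L[ℂ] H) φ) φ
          : ℂ).re) ∧
    (∀ φ : H, (inner ℂ (Qp (ContinuousLinearMap.adjoint R φ)) (ContinuousLinearMap.adjoint R φ)
          : ℂ).re ≤
        (inner ℂ ((((2 * Complex.I)⁻¹ • (R - ContinuousLinearMap.adjoint R)) : H →L[ℂ] H) φ) φ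
          : ℂ).re) := by
  set c : ℂ := (2 * Complex.I)⁻¹ with hc
  set A : H →L[ℂ] H := c • (Q - adjoint Q) with hA
  set B : H →L[ℂ] H := c • (R - adjoint R) with hB
  have hRad : (adjoint R).comp (adjoint Q) = ContinuousLinearMap.id ℂ H := by
    rw [← adjoint_comp, hQR, adjoint_id]
  have hQad : (adjoint Q).comp (adjoint R) = ContinuousLinearMap.id ℂ H := by
    rw [← adjoint_comp, hRQ, adjoint_id]
  have hop1 : (adjoint R).comp (A.comp R) = -B := by
    rw [hA, hB, smul_comp, comp_smul, sub_comp, comp_sub, hQR, comp_id,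
      ← comp_assoc, hRad, ContinuousLinearMap.id_comp, ← smul_neg, neg_sub]
  have hop2 : R.comp (A.comp (adjoint R)) = -B := by
    rw [hA, hB, smul_comp, comp_smul, sub_comp, comp_sub, ← comp_assoc, hRQ,
      ContinuousLinearMap.id_comp, hQad, comp_id, ← smul_neg, neg_sub]
  constructor
  · intro φ
    have key : (inner ℂ (B φ) φ : ℂ).re = -(inner ℂ (A (R φ)) (R φ) : ℂ).re := by
      have h := congrArg (fun T : H →L[ℂ] H => (inner ℂ (T φ) φ : ℂ).re) hop1
      simp only [comp_apply, neg_apply, inner_neg_left, Complex.neg_re] at h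
      rw [adjoint_inner_left] at h
      linarith
    have := hdom (R φ)
    rw [key]
    linarith
  · intro φ
    have key : (inner ℂ (B φ) φ : ℂ).re = -(inner ℂ (A (adjoint R φ)) (adjoint R φ) : ℂ).re := by
      have h := congrArg (fun T : H →L[ℂ] H => (inner ℂ φ (T φ) : ℂ).re) hop2
      simp only [comp_apply, neg_apply, inner_neg_right, Complex.neg_re] at h
      rw [← adjoint_inner_left] at h
      have h1 : (inner ℂ (B φ) φ : ℂ).re = (inner ℂ φ (B φ) : ℂ).re := by
        rw [← inner_conj_symm, Complex.conj_re]
      have h2 : (inner ℂ (A (adjoint R φ)) (adjoint R φ) : ℂ).re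
          = (inner ℂ (adjoint R φ) (A (adjoint R φ)) : ℂ).re := by
        rw [← inner_conj_symm, Complex.conj_re]
      linarith
    have := hdom (adjoint R φ)
    rw [key]
    linarith
end

section
/- Let A be a complex unital Banach algebra, let w ∈ A, and let z, r be nonzero complex scalars. Suppose R, S ∈ A satisfy the resolvent identity R - S = (z² + r²)·S·w·R. Define R^{[n]} = |z|^{2n}(Rw)^{n-1}R and S^{[m]} = r^{2m}(Sw)^{m-1}S (with |z| = r). Then for every n ≥ 1 and N ≥ n: R^{[n]} = Σ_{m=n}^{N} C(m-1, n-1)(1 + ẑ²)^{m-n} S^{[m]} + Σ_{ν=max(1, n-N)}^{n} C(N, n-ν)(1 + ẑ²)^{N-n+ν} S^{[N]} w R^{[ν]}, where ẑ = z/r and C(·,·) denotes binomial coefficients. -/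
open Finset

section
variable {A : Type*} [Ring A] [Algebra ℂ A] (c : ℂ) (T Y : A) (X : ℕ → A)

lemma pascal_sum (k : ℕ) (g : ℕ → A) :
    ∑ i ∈ range (k+2), ((Nat.choose (k+1) i : ℂ) * c ^ i) • g i
      = ∑ i ∈ range (k+1), ((Nat.choose k i : ℂ) * c ^ i) • g i
        + ∑ i ∈ range (k+1), ((Nat.choose k i : ℂ) * c ^ (i+1)) • g (i+1) := by
  rw [Finset.sum_range_succ' (fun i => ((Nat.choose (k+1) i : ℂ) * c ^ i) • g i) (k+1)]
  have e1 : ∀ i ∈ range (k+1),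
      ((Nat.choose (k+1) (i+1) : ℂ) * c ^ (i+1)) • g (i+1)
        = ((Nat.choose k i : ℂ) * c ^ (i+1)) • g (i+1)
          + ((Nat.choose k (i+1) : ℂ) * c ^ (i+1)) • g (i+1) := by
    intro i _
    rw [Nat.choose_succ_succ]
    push_cast
    rw [add_mul, add_smul]
  rw [Finset.sum_congr rfl e1, Finset.sum_add_distrib]
  have e2 : ∑ i ∈ range (k+1), ((Nat.choose k (i+1) : ℂ) * c ^ (i+1)) • g (i+1)
      + ((Nat.choose (k+1) 0 : ℂ) * c ^ 0) • g 0
      = ∑ i ∈ range (k+1), ((Nat.choose k i : ℂ) * c ^ i) • g i := by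
    have : ((Nat.choose (k+1) 0 : ℂ) * c ^ 0) • g 0
        = ((Nat.choose k 0 : ℂ) * c ^ 0) • g 0 := by simp
    rw [this, ← Finset.sum_range_succ' (fun i => ((Nat.choose k i : ℂ) * c ^ i) • g i) (k+1),
      Finset.sum_range_succ]
    simp [Nat.choose_succ_self]
  rw [add_assoc, add_comm (∑ i ∈ range (k+1), ((Nat.choose k i : ℂ) * c ^ (i+1)) • g (i+1)), e2,
    add_comm]

lemma lemD (h2 : ∀ ν, 1 ≤ ν → X (ν+1) = T * X ν + c • (T * X (ν+1))) :
    ∀ k n, k + 1 ≤ n →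
      T * X n = ∑ i ∈ range (k+1),
        ((Nat.choose k i : ℂ) * c ^ i) • (T ^ (k+1) * X (n - k + i)) := by
  intro k
  induction k with
  | zero => intro n hn; simp
  | succ k ih =>
    intro n hn
    rw [ih n (by omega)]
    have expand : ∀ i ∈ range (k+1),
        ((Nat.choose k i : ℂ) * c ^ i) • (T ^ (k+1) * X (n - k + i))
          = ((Nat.choose k i : ℂ) * c ^ i) • (T ^ (k+2) * X (n - (k+1) + i))
            + ((Nat.choose k i : ℂ) * c ^ (i+1)) • (T ^ (k+2) * X (n - k + i)) := by
      intro i hi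
      have hX : X (n - k + i) = T * X (n - (k+1) + i) + c • (T * X (n - k + i)) := by
        have h := h2 (n - (k+1) + i) (by omega)
        have e : n - (k+1) + i + 1 = n - k + i := by omega
        rw [e] at h
        exact h
      have key : T ^ (k+1) * X (n - k + i)
          = T ^ (k+2) * X (n - (k+1) + i) + c • (T ^ (k+2) * X (n - k + i)) := by
        conv_lhs => rw [hX]
        rw [mul_add, mul_smul_comm, ← mul_assoc, ← pow_succ, ← mul_assoc, ← pow_succ]
      rw [key, smul_add, smul_smul]
      ring_nf
    rw [Finset.sum_congr rfl expand, Finset.sum_add_distrib]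
    rw [pascal_sum]
    congr 1
    apply Finset.sum_congr rfl
    intro i hi
    have e : n - (k+1) + (i+1) = n - k + i := by
      simp only [Finset.mem_range] at hi
      omega
    rw [e]
lemma lemQ (h1 : X 1 = Y + c • (T * X 1))
    (h2 : ∀ ν, 1 ≤ ν → X (ν+1) = T * X ν + c • (T * X (ν+1))) :
    ∀ m, X (m+1) = T ^ m * Y
      + ∑ i ∈ range (m+1), ((Nat.choose (m+1) (i+1) : ℂ) * c ^ (i+1)) • (T ^ (m+1) * X (1+i)) := by
  intro m
  induction m with
  | zero => simpa using h1
  | succ m ih =>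
    rw [h2 (m+1) (by omega)]
    -- first piece
    have p1 : T * X (m+1)
        = T ^ (m+1) * Y
          + ∑ i ∈ range (m+1),
              ((Nat.choose (m+1) (i+1) : ℂ) * c ^ (i+1)) • (T ^ (m+2) * X (1+i)) := by
      rw [ih, mul_add, Finset.mul_sum, ← mul_assoc, ← pow_succ']
      congr 1
      apply Finset.sum_congr rfl
      intro i _
      rw [mul_smul_comm, ← mul_assoc, ← pow_succ']
    have p2 : c • (T * X (m+2))
        = ∑ i ∈ range (m+2), ((Nat.choose (m+1) i : ℂ) * c ^ (i+1)) • (T ^ (m+2) * X (1+i)) := by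
      have hD := lemD c T X h2 (m+1) (m+2) (by omega)
      have e : ∀ i, m + 2 - (m+1) + i = 1 + i := by intro i; omega
      rw [hD, Finset.smul_sum]
      apply Finset.sum_congr rfl
      intro i _
      rw [e i, smul_smul]
      ring_nf
    rw [p1, p2]
    have pascal : ∀ i ∈ range (m+2),
        ((Nat.choose (m+2) (i+1) : ℂ) * c ^ (i+1)) • (T ^ (m+2) * X (1+i))
          = ((Nat.choose (m+1) (i+1) : ℂ) * c ^ (i+1)) • (T ^ (m+2) * X (1+i))
            + ((Nat.choose (m+1) i : ℂ) * c ^ (i+1)) • (T ^ (m+2) * X (1+i)) := by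
      intro i _
      rw [Nat.choose_succ_succ']
      push_cast
      rw [add_mul, add_smul, add_comm]
    rw [Finset.sum_congr rfl pascal, Finset.sum_add_distrib]
    have etop : ∑ i ∈ range (m+2),
        ((Nat.choose (m+1) (i+1) : ℂ) * c ^ (i+1)) • (T ^ (m+2) * X (1+i))
        = ∑ i ∈ range (m+1),
        ((Nat.choose (m+1) (i+1) : ℂ) * c ^ (i+1)) • (T ^ (m+2) * X (1+i)) := by
      rw [Finset.sum_range_succ]
      simp [Nat.choose_succ_self]
    rw [etop]
    abel
lemma lemP (h1 : X 1 = Y + c • (T * X 1))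
    (h2 : ∀ ν, 1 ≤ ν → X (ν+1) = T * X ν + c • (T * X (ν+1))) :
    ∀ n' N, n' + 1 ≤ N →
      X (n'+1) = ∑ j ∈ range (N - n'), ((Nat.choose (n'+j) n' : ℂ) * c ^ j) • (T ^ (n'+j) * Y)
        + ∑ i ∈ range (n'+1),
            ((Nat.choose N (n'-i) : ℂ) * c ^ (N-n'+i)) • (T ^ N * X (1+i)) := by
  intro n' N hN
  induction N, hN using Nat.le_induction with
  | base =>
    rw [lemQ c T Y X h1 h2 n']
    congr 1
    · have e : n' + 1 - n' = 1 := by omega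
      rw [e]
      simp
    · apply Finset.sum_congr rfl
      intro i hi
      simp only [Finset.mem_range] at hi
      have e1 : Nat.choose (n'+1) (n'-i) = Nat.choose (n'+1) (i+1) := by
        rw [← Nat.choose_symm (by omega : i+1 ≤ n'+1)]
        congr 1
        omega
      have e2 : n' + 1 - n' + i = i + 1 := by omega
      rw [e1, e2]
  | succ N hN ih =>
    rw [ih]
    -- abbreviations
    set u : ℕ → A := fun i => T ^ (N+1) * X (1+i) with hu
    -- expand the boundary sum
    have step2 : ∀ i ∈ range n',
        ((Nat.choose N (n'-(i+1)) : ℂ) * c ^ (N-n'+(i+1))) • (T ^ N * X (1+(i+1)))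
          = ((Nat.choose N (n'-(i+1)) : ℂ) * c ^ (N-n'+(i+1))) • u i
            + ((Nat.choose N (n'-(i+1)) : ℂ) * c ^ (N-n'+(i+1)) * c) • u (i+1) := by
      intro i hi
      have hx : X (1+(i+1)) = T * X (1+i) + c • (T * X (1+(i+1))) := by
        have h := h2 (1+i) (by omega)
        have e : 1 + i + 1 = 1 + (i+1) := by omega
        rw [e] at h
        exact h
      rw [hx, mul_add, mul_smul_comm, smul_add, smul_smul, hu]
      simp only [← mul_assoc, ← pow_succ]
    have step0 : ((Nat.choose N (n'-0) : ℂ) * c ^ (N-n'+0)) • (T ^ N * X (1+0))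
        = ((Nat.choose N n' : ℂ) * c ^ (N-n')) • (T ^ N * Y)
          + ((Nat.choose N n' : ℂ) * c ^ (N-n') * c) • u 0 := by
      have hx : X (1+0) = Y + c • (T * X 1) := by simpa using h1
      rw [hx, mul_add, mul_smul_comm, smul_add, smul_smul, hu]
      simp only [Nat.sub_zero, Nat.add_zero, ← mul_assoc, ← pow_succ]
    -- peel bottom of boundary sum
    rw [Finset.sum_range_succ'
      (fun i => ((Nat.choose N (n'-i) : ℂ) * c ^ (N-n'+i)) • (T ^ N * X (1+i))) n']
    rw [Finset.sum_congr rfl step2, Finset.sum_add_distrib, step0]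
    -- now RHS(N+1) pieces
    have S1' : ∑ j ∈ range (N+1-n'), ((Nat.choose (n'+j) n' : ℂ) * c ^ j) • (T ^ (n'+j) * Y)
        = ∑ j ∈ range (N-n'), ((Nat.choose (n'+j) n' : ℂ) * c ^ j) • (T ^ (n'+j) * Y)
          + ((Nat.choose N n' : ℂ) * c ^ (N-n')) • (T ^ N * Y) := by
      have e : N + 1 - n' = (N - n') + 1 := by omega
      have e2 : n' + (N - n') = N := by omega
      rw [e, Finset.sum_range_succ, e2]
    have S2' : ∑ i ∈ range (n'+1),
          ((Nat.choose (N+1) (n'-i) : ℂ) * c ^ (N+1-n'+i)) • u i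
        = ∑ i ∈ range (n'+1), ((Nat.choose N (n'-i) : ℂ) * c ^ (N-n'+i) * c) • u i
          + ∑ i ∈ range n', ((Nat.choose N (n'-(i+1)) : ℂ) * c ^ (N-n'+(i+1))) • u i := by
      rw [Finset.sum_range_succ, Finset.sum_range_succ
        (fun i => ((Nat.choose N (n'-i) : ℂ) * c ^ (N-n'+i) * c) • u i)]
      have etop : ((Nat.choose (N+1) (n'-n') : ℂ) * c ^ (N+1-n'+n')) • u n'
          = ((Nat.choose N (n'-n') : ℂ) * c ^ (N-n'+n') * c) • u n' := by
        have e1 : n' - n' = 0 := by omega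
        have e2 : N + 1 - n' + n' = N + 1 := by omega
        have e3 : N - n' + n' = N := by omega
        rw [e1, e2, e3]
        simp [pow_succ]
      rw [etop]
      have emid : ∀ i ∈ range n',
          ((Nat.choose (N+1) (n'-i) : ℂ) * c ^ (N+1-n'+i)) • u i
            = ((Nat.choose N (n'-i) : ℂ) * c ^ (N-n'+i) * c) • u i
              + ((Nat.choose N (n'-(i+1)) : ℂ) * c ^ (N-n'+(i+1))) • u i := by
        intro i hi
        simp only [Finset.mem_range] at hi
        have e1 : n' - i = (n' - (i+1)) + 1 := by omega
        have e2 : N + 1 - n' + i = N - n' + (i+1) := by omega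
        have e3 : N - n' + i + 1 = N - n' + (i+1) := by omega
        rw [e2, e1, Nat.choose_succ_succ']
        push_cast
        rw [add_mul, add_smul, mul_assoc, ← pow_succ, e3, add_comm]
      rw [Finset.sum_congr rfl emid, Finset.sum_add_distrib, add_right_comm]
    rw [S1', S2']
    have e0 : ((Nat.choose N n' : ℂ) * c ^ (N-n') * c) • u 0
        = ((Nat.choose N (n'-0) : ℂ) * c ^ (N-n'+0) * c) • u 0 := by norm_num
    have comb := (Finset.sum_range_succ'
      (fun i => ((Nat.choose N (n'-i) : ℂ) * c ^ (N-n'+i) * c) • u i) n').symm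
    rw [e0, ← comb]
    abel
end



/-- combinatorial resolvent expansion (2.19)–(2.20). In a complex unital
Banach algebra, if `R - S = (z² + r²) S w R` with `r = |z|`, and
`R^{[n]} = |z|^{2n} (Rw)^{n-1} R`, `S^{[m]} = r^{2m} (Sw)^{m-1} S`, then for `1 ≤ n ≤ N`:
`R^{[n]} = Σ_{m=n}^N C(m-1,n-1)(1+ẑ²)^{m-n} S^{[m]}
  + Σ_{ν=max(1,n-N)}^n C(N,n-ν)(1+ẑ²)^{N-n+ν} S^{[N]} w R^{[ν]}` where `ẑ = z/r`. -/
theorem stmt_5 {A : Type*} [NormedRing A] [NormedAlgebra ℂ A] (w R S : A) (z r : ℂ)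
    (hz : z ≠ 0) (hr : r ≠ 0) (hzr : (‖z‖ : ℂ) = r)
    (hres : R - S = (z ^ 2 + r ^ 2) • (S * (w * R)))
    (Rn Sn : ℕ → A)
    (hRn : ∀ n : ℕ, Rn n = ((‖z‖ : ℂ) ^ (2 * n)) • ((R * w) ^ (n - 1) * R))
    (hSn : ∀ m : ℕ, Sn m = (r ^ (2 * m)) • ((S * w) ^ (m - 1) * S)) :
    ∀ n N : ℕ, 1 ≤ n → n ≤ N →
      Rn n =
        (∑ m ∈ Finset.Icc n N,
            ((Nat.choose (m - 1) (n - 1) : ℂ) * (1 + (z / r) ^ 2) ^ (m - n)) • Sn m)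
          + ∑ ν ∈ Finset.Icc (max 1 (n - N)) n,
            ((Nat.choose N (n - ν) : ℂ) * (1 + (z / r) ^ 2) ^ (N - n + ν)) •
              (Sn N * w * Rn ν) := by
  set c : ℂ := 1 + (z / r) ^ 2 with hc
  have hcr : c * r ^ 2 = z ^ 2 + r ^ 2 := by
    field_simp [hc]
    rw [hc, add_mul, div_pow, div_mul_cancel₀ _ (pow_ne_zero 2 hr)]; ring
  have hR : R = S + (z ^ 2 + r ^ 2) • (S * (w * R)) := by
    rw [← hres]; abel
  have hRn' : ∀ n : ℕ, Rn n = (r ^ (2 * n)) • ((R * w) ^ (n - 1) * R) := by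
    intro n; rw [hRn n, hzr]
  -- hypotheses of lemP
  have h1 : Rn 1 = r ^ 2 • S + c • ((r ^ 2 • (S * w)) * Rn 1) := by
    rw [hRn' 1]
    norm_num
    conv_lhs => rw [hR]
    simp only [smul_mul_assoc, mul_smul_comm, smul_smul, mul_add, smul_add, add_mul, mul_assoc]
    match_scalars
    · ring
    · simp only [hc]; field_simp; ring
  have h2 : ∀ ν, 1 ≤ ν →
      Rn (ν + 1) = (r ^ 2 • (S * w)) * Rn ν + c • ((r ^ 2 • (S * w)) * Rn (ν + 1)) := by
    intro ν hν
    obtain ⟨μ, rfl⟩ : ∃ μ, ν = μ + 1 := ⟨ν - 1, by omega⟩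
    rw [hRn' (μ + 1 + 1), hRn' (μ + 1)]
    have epow : (R * w) ^ (μ + 1 + 1 - 1) * R = R * (w * ((R * w) ^ μ * R)) := by
      have : μ + 1 + 1 - 1 = μ + 1 := by omega
      rw [this, pow_succ', mul_assoc, mul_assoc]
    rw [epow]
    have e2 : (μ + 1 - 1 : ℕ) = μ := by omega
    rw [e2]
    have key : ∀ P : A, R * (w * P)
        = S * (w * P) + (z ^ 2 + r ^ 2) • (S * (w * (R * (w * P)))) := by
      intro P
      conv_lhs => rw [hR]
      rw [add_mul, smul_mul_assoc]
      simp only [mul_assoc]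
    conv_lhs => rw [key ((R * w) ^ μ * R)]
    simp only [smul_mul_assoc, mul_smul_comm, smul_smul, mul_add, smul_add, add_mul, mul_assoc]
    match_scalars
    · ring
    · simp only [hc]; field_simp; ring
  intro n N hn hnN
  obtain ⟨n', rfl⟩ : ∃ n', n = n' + 1 := ⟨n - 1, by omega⟩
  rw [lemP c (r ^ 2 • (S * w)) (r ^ 2 • S) Rn h1 h2 n' N hnN]
  congr 1
  · rw [← Finset.Ico_add_one_right_eq_Icc, Finset.sum_Ico_eq_sum_range]
    have e : N + 1 - (n' + 1) = N - n' := by omega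
    rw [e]
    apply Finset.sum_congr rfl
    intro j hj
    have e1 : n' + 1 + j - 1 = n' + j := by omega
    have e2 : n' + 1 - 1 = n' := by omega
    have e3 : n' + 1 + j - (n' + 1) = j := by omega
    rw [e1, e2, e3, hSn (n' + 1 + j), e1]
    congr 1
    rw [smul_pow, smul_mul_assoc, mul_smul_comm, smul_smul]
    congr 1
    rw [← pow_succ, ← pow_mul]
    congr 1
    omega
  · have e0 : n' + 1 - N = 0 := by omega
    rw [e0]
    norm_num
    rw [← Finset.Ico_add_one_right_eq_Icc, Finset.sum_Ico_eq_sum_range]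
    have e : n' + 1 + 1 - 1 = n' + 1 := by omega
    rw [e]
    apply Finset.sum_congr rfl
    intro i hi
    have e1 : n' + 1 - (1 + i) = n' - i := by omega
    have e2 : N - (n' + 1) + (1 + i) = N - n' + i := by omega
    rw [e1, e2, hSn N]
    congr 1
    obtain ⟨M, rfl⟩ : ∃ M, N = M + 1 := ⟨N - 1, by omega⟩
    have e3 : (M + 1 - 1 : ℕ) = M := by omega
    rw [e3]
    simp only [smul_pow, smul_mul_assoc, mul_smul_comm, smul_smul]
    congr 1
    · rw [← pow_mul]
    · rw [pow_succ]
      simp [mul_assoc]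
end

section
/- Let A be a complex unital Banach algebra and let Q, w, Q₀ ∈ A with Q and Q₀ invertible, R = Q⁻¹, R₀ = Q₀⁻¹. For n ≥ 1 set T^{[n]} = (Rw)^{n-1}R and T₀^{[n]} = R₀ⁿ. Then for all n ≥ 1: T^{[n]} - T₀^{[n]} = Σ_{k=1}^{n-1} T^{[n-k]}(w - 1)T₀^{[k]} - Σ_{k=1}^{n} T^{[n-k+1]}(Q - Q₀)T₀^{[k]}. -/
/-- abstract Lemma 2.1. In a complex unital Banach algebra, with `R = Q⁻¹`,
`R₀ = Q₀⁻¹`, `T^{[n]} = (Rw)^{n-1}R` and `T₀^{[n]} = R₀ⁿ`, one has for every `n ≥ 1`: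
`T^{[n]} - T₀^{[n]} = Σ_{k=1}^{n-1} T^{[n-k]}(w-1)T₀^{[k]} - Σ_{k=1}^n T^{[n-k+1]}(Q-Q₀)T₀^{[k]}`. -/
theorem stmt_6 {A : Type*} [NormedRing A] [NormedAlgebra ℂ A] (Q Q₀ w R R₀ : A)
    (h1 : Q * R = 1) (h2 : R * Q = 1) (h3 : Q₀ * R₀ = 1) (h4 : R₀ * Q₀ = 1) :
    ∀ n : ℕ, 1 ≤ n →
      (R * w) ^ (n - 1) * R - R₀ ^ n =
        (∑ k ∈ Finset.Icc 1 (n - 1), (R * w) ^ (n - k - 1) * R * (w - 1) * R₀ ^ k)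
          - ∑ k ∈ Finset.Icc 1 n, (R * w) ^ (n - k) * R * (Q - Q₀) * R₀ ^ k := by
  have h5 : R * (Q - Q₀) * R₀ = R₀ - R := by
    rw [mul_sub, sub_mul, h2, one_mul, mul_assoc, h3, mul_one]
  intro n hn
  induction n, hn using Nat.le_induction with
  | base =>
    simp only [Nat.sub_self, Finset.Icc_self, Finset.Icc_eq_empty_of_lt Nat.zero_lt_one,
      Finset.sum_empty, Finset.sum_singleton, pow_zero, one_mul, pow_one, zero_sub, h5, neg_sub]
  | succ n hn IH =>
    obtain ⟨m, rfl⟩ : ∃ m, n = m + 1 := ⟨n - 1, by omega⟩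
    simp only [Nat.add_sub_cancel] at IH ⊢
    have IH1 : (∑ k ∈ Finset.Icc 1 m, (R * w) ^ (m + 1 - k - 1) * R * (w - 1) * R₀ ^ k)
        = ∑ k ∈ Finset.Icc 1 m, (R * w) ^ (m - k) * R * (w - 1) * R₀ ^ k := by
      refine Finset.sum_congr rfl fun k hk => ?_
      have hk' := (Finset.mem_Icc.mp hk).2
      rw [show m + 1 - k - 1 = m - k from by omega]
    rw [IH1] at IH
    have hS1 : (∑ k ∈ Finset.Icc 1 (m + 1), (R * w) ^ (m + 1 + 1 - k - 1) * R * (w - 1) * R₀ ^ k)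
        = (R * w) * (∑ k ∈ Finset.Icc 1 m, (R * w) ^ (m - k) * R * (w - 1) * R₀ ^ k)
          + R * (w - 1) * R₀ ^ (m + 1) := by
      rw [Finset.sum_Icc_succ_top (by omega : 1 ≤ m + 1), Finset.mul_sum]
      congr 1
      · refine Finset.sum_congr rfl fun k hk => ?_
        have hk' := (Finset.mem_Icc.mp hk).2
        rw [show m + 1 + 1 - k - 1 = (m - k) + 1 from by omega, pow_succ']
        simp only [mul_assoc]
      · rw [show m + 1 + 1 - (m + 1) - 1 = 0 from by omega, pow_zero, one_mul]
    have hS2 : (∑ k ∈ Finset.Icc 1 (m + 1 + 1), (R * w) ^ (m + 1 + 1 - k) * R * (Q - Q₀) * R₀ ^ k)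
        = (R * w) * (∑ k ∈ Finset.Icc 1 (m + 1), (R * w) ^ (m + 1 - k) * R * (Q - Q₀) * R₀ ^ k)
          + R * (Q - Q₀) * R₀ ^ (m + 1 + 1) := by
      rw [Finset.sum_Icc_succ_top (by omega : 1 ≤ m + 1 + 1), Finset.mul_sum]
      congr 1
      · refine Finset.sum_congr rfl fun k hk => ?_
        have hk' := (Finset.mem_Icc.mp hk).2
        rw [show m + 1 + 1 - k = (m + 1 - k) + 1 from by omega, pow_succ']
        simp only [mul_assoc]
      · rw [Nat.sub_self, pow_zero, one_mul]
    rw [hS1, hS2]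
    have e1 : R * (w - 1) * R₀ ^ (m + 1) = R * w * R₀ ^ (m + 1) - R * R₀ ^ (m + 1) := by
      rw [mul_sub, mul_one, sub_mul]
    have e2 : R * (Q - Q₀) * R₀ ^ (m + 1 + 1) = R₀ ^ (m + 1 + 1) - R * R₀ ^ (m + 1) := by
      calc R * (Q - Q₀) * R₀ ^ (m + 1 + 1) = R * (Q - Q₀) * (R₀ * R₀ ^ (m + 1)) := by
            rw [← pow_succ']
        _ = (R * (Q - Q₀) * R₀) * R₀ ^ (m + 1) := by rw [← mul_assoc]
        _ = (R₀ - R) * R₀ ^ (m + 1) := by rw [h5]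
        _ = R₀ ^ (m + 1 + 1) - R * R₀ ^ (m + 1) := by rw [sub_mul, ← pow_succ']
    calc (R * w) ^ (m + 1) * R - R₀ ^ (m + 1 + 1)
        = (R * w) * ((R * w) ^ m * R - R₀ ^ (m + 1)) + (R * w) * R₀ ^ (m + 1)
            - R₀ ^ (m + 1 + 1) := by
          rw [mul_sub, ← mul_assoc, ← pow_succ']
          abel
      _ = (R * w) * ((∑ k ∈ Finset.Icc 1 m, (R * w) ^ (m - k) * R * (w - 1) * R₀ ^ k)
            - ∑ k ∈ Finset.Icc 1 (m + 1), (R * w) ^ (m + 1 - k) * R * (Q - Q₀) * R₀ ^ k)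
            + (R * w) * R₀ ^ (m + 1) - R₀ ^ (m + 1 + 1) := by rw [IH]
      _ = _ := by rw [mul_sub, e1, e2]; abel
end

section
/- Let δ ∈ (1/2, 1]. Let (aₙ)_{n∈ℕ} and (bₘ)_{m∈ℕ} be nonnegative sequences in ℓ². Then Σ_{n∈ℕ} ⟨n⟩^{-δ} aₙ (Σ_{m=0}^{n} ⟨m+1⟩^{δ-1} bₘ) ≤ C ‖a‖_{ℓ²} ‖b‖_{ℓ²} for a constant C depending only on δ, where ⟨n⟩ = (1 + n²)^{1/2}. -/
private lemma antitoneOn_rpow_nonpos {p : ℝ} (hp : p ≤ 0) {c d : ℝ} (hc : 0 < c) :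
    AntitoneOn (fun x : ℝ => x ^ p) (Set.Icc c d) := fun _x hx _y _hy hxy =>
  Real.rpow_le_rpow_of_nonpos (lt_of_lt_of_le hc hx.1) hxy hp

private lemma le_of_sq_le_sq' {a b : ℝ} (h : a ^ 2 ≤ b ^ 2) (hb : 0 ≤ b) : a ≤ b := by
  nlinarith [sq_nonneg (a - b), sq_nonneg (a + b)]

private lemma rpow_sq' {x : ℝ} (hx : 0 ≤ x) (c : ℝ) : (x ^ c) ^ 2 = x ^ (2 * c) := by
  rw [← Real.rpow_natCast (x ^ c) 2, ← Real.rpow_mul hx, mul_comm]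
  norm_num

private lemma helperA {p : ℝ} (hp0 : -1 < p) (hp1 : p ≤ 0) (N : ℕ) :
    ∑ m ∈ Finset.range N, ((m : ℝ) + 1) ^ p ≤ (1 + 1 / (p + 1)) * (N : ℝ) ^ (p + 1) := by
  have hp1' : 0 < p + 1 := by linarith
  rcases Nat.eq_zero_or_pos N with h | h
  · subst h; simp [Real.zero_rpow (ne_of_gt hp1')]
  · have h1N : (1 : ℝ) ≤ (N : ℝ) := by exact_mod_cast h
    have hNp : (1 : ℝ) ≤ (N : ℝ) ^ (p + 1) := Real.one_le_rpow h1N hp1'.le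
    have hsplit : ∑ m ∈ Finset.range N, ((m : ℝ) + 1) ^ p
        = 1 + ∑ m ∈ Finset.Ico 1 N, ((m : ℝ) + 1) ^ p := by
      rw [Finset.range_eq_Ico, Finset.sum_eq_sum_Ico_succ_bot h]
      norm_num
    have hanti : AntitoneOn (fun x : ℝ => x ^ p) (Set.Icc ((1 : ℕ) : ℝ) ((N : ℕ) : ℝ)) :=
      antitoneOn_rpow_nonpos hp1 (by norm_num)
    have hint := AntitoneOn.sum_le_integral_Ico h hanti
    rw [integral_rpow (Or.inl hp0)] at hint
    push_cast at hint
    have hle : ∑ i ∈ Finset.Ico 1 N, ((i : ℝ) + 1) ^ p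
        ≤ ((N : ℝ) ^ (p + 1) - 1) / (p + 1) := by
      simpa using hint
    have e1 : ((N : ℝ) ^ (p + 1) - 1) / (p + 1) ≤ (N : ℝ) ^ (p + 1) / (p + 1) :=
      div_le_div_of_nonneg_right (by linarith) hp1'.le |>.trans_eq rfl
    have e2 : (1 + 1 / (p + 1)) * (N : ℝ) ^ (p + 1)
        = (N : ℝ) ^ (p + 1) + (N : ℝ) ^ (p + 1) / (p + 1) := by
      field_simp
    rw [hsplit, e2]
    linarith

private lemma helperB {ε : ℝ} (hε : 0 < ε) (m M : ℕ) :
    ∑ n ∈ Finset.Ico m M, ((n : ℝ) + 1) ^ (-1 - ε) ≤ (1 + 1 / ε) * ((m : ℝ) + 1) ^ (-ε) := by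
  have hm0 : (0 : ℝ) ≤ (m : ℝ) := Nat.cast_nonneg m
  have hm1 : (1 : ℝ) ≤ (m : ℝ) + 1 := by linarith
  have hrm : (0 : ℝ) ≤ ((m : ℝ) + 1) ^ (-ε) := Real.rpow_nonneg (by linarith) _
  rcases le_or_gt M m with h | h
  · rw [Finset.Ico_eq_empty (by omega)]
    simp only [Finset.sum_empty]
    positivity
  · rw [Finset.sum_eq_sum_Ico_succ_bot h]
    have h1 : ((m : ℝ) + 1) ^ (-1 - ε) ≤ ((m : ℝ) + 1) ^ (-ε) :=
      Real.rpow_le_rpow_of_exponent_le hm1 (by linarith)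
    have h2 : ∑ n ∈ Finset.Ico (m + 1) M, ((n : ℝ) + 1) ^ (-1 - ε)
        ≤ ((m : ℝ) + 1) ^ (-ε) / ε := by
      have hanti : AntitoneOn (fun x : ℝ => x ^ (-1 - ε))
          (Set.Icc (((m + 1 : ℕ)) : ℝ) ((M : ℕ) : ℝ)) :=
        antitoneOn_rpow_nonpos (by linarith) (by positivity)
      have hle : m + 1 ≤ M := h
      have H := AntitoneOn.sum_le_integral_Ico hle hanti
      have hMpos : (0 : ℝ) < (M : ℝ) := by
        exact_mod_cast Nat.pos_of_ne_zero (by omega)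
      have hnotmem : (0 : ℝ) ∉ Set.uIcc (((m + 1 : ℕ) : ℝ)) ((M : ℕ) : ℝ) :=
        Set.notMem_uIcc_of_lt (by positivity) hMpos
      rw [integral_rpow (Or.inr ⟨by linarith, hnotmem⟩)] at H
      push_cast at H
      have he : (-1 - ε + 1) = -ε := by ring
      rw [he] at H
      have hMr : (0 : ℝ) ≤ (M : ℝ) ^ (-ε) := Real.rpow_nonneg hMpos.le _
      have e3 : ((M : ℝ) ^ (-ε) - ((m : ℝ) + 1) ^ (-ε)) / (-ε)
          = (((m : ℝ) + 1) ^ (-ε) - (M : ℝ) ^ (-ε)) / ε := by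
        rw [div_neg, ← neg_div, neg_sub]
      calc ∑ n ∈ Finset.Ico (m + 1) M, ((n : ℝ) + 1) ^ (-1 - ε)
          ≤ ((M : ℝ) ^ (-ε) - ((m : ℝ) + 1) ^ (-ε)) / (-ε) := by simpa using H
        _ = (((m : ℝ) + 1) ^ (-ε) - (M : ℝ) ^ (-ε)) / ε := e3
        _ ≤ ((m : ℝ) + 1) ^ (-ε) / ε := by
            apply div_le_div_of_nonneg_right ?_ hε.le |>.trans_eq rfl
            linarith
    have e4 : (1 + 1 / ε) * ((m : ℝ) + 1) ^ (-ε)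
        = ((m : ℝ) + 1) ^ (-ε) + ((m : ℝ) + 1) ^ (-ε) / ε := by
      field_simp
    rw [e4]
    linarith
private lemma baseP {x : ℝ} (hx : 0 ≤ x) {q : ℝ} (hq : q ≤ 0) :
    (1 + (x + 1) ^ 2) ^ (q / 2) ≤ (x + 1) ^ q := by
  have h1 : (0 : ℝ) < (x + 1) ^ 2 := by positivity
  have h2 : (x + 1) ^ 2 ≤ 1 + (x + 1) ^ 2 := by linarith
  calc (1 + (x + 1) ^ 2) ^ (q / 2) ≤ ((x + 1) ^ 2) ^ (q / 2) :=
        Real.rpow_le_rpow_of_nonpos h1 h2 (by linarith)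
    _ = (x + 1) ^ q := by
        rw [← Real.rpow_natCast (x + 1) 2, ← Real.rpow_mul (by linarith)]
        congr 1
        push_cast
        ring

private lemma baseQ {x : ℝ} (hx : 0 ≤ x) {q : ℝ} (hq0 : 0 ≤ q) (hq1 : q ≤ 1) :
    (1 + (x + 1) ^ 2) ^ (q / 2) ≤ 2 * (x + 1) ^ q := by
  have h1 : 1 + (x + 1) ^ 2 ≤ (2 * (x + 1)) ^ 2 := by nlinarith
  have h6 : (0 : ℝ) ≤ (x + 1) ^ q := Real.rpow_nonneg (by linarith) _
  calc (1 + (x + 1) ^ 2) ^ (q / 2) ≤ ((2 * (x + 1)) ^ 2) ^ (q / 2) :=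
        Real.rpow_le_rpow (by positivity) h1 (by linarith)
    _ = (2 * (x + 1)) ^ q := by
        rw [← Real.rpow_natCast (2 * (x + 1)) 2, ← Real.rpow_mul (by linarith)]
        congr 1
        push_cast
        ring
    _ = 2 ^ q * (x + 1) ^ q := Real.mul_rpow (by norm_num) (by linarith)
    _ ≤ 2 * (x + 1) ^ q := by
        have h5 : (2 : ℝ) ^ q ≤ 2 := by
          calc (2 : ℝ) ^ q ≤ (2 : ℝ) ^ (1 : ℝ) :=
                Real.rpow_le_rpow_of_exponent_le one_le_two hq1
            _ = 2 := Real.rpow_one 2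
        exact mul_le_mul_of_nonneg_right h5 h6

private lemma baseOuter {x : ℝ} (hx : 0 ≤ x) {d : ℝ} (hd0 : 0 ≤ d) (hd1 : d ≤ 1) :
    (1 + x ^ 2) ^ (-(d / 2)) ≤ 2 * (x + 1) ^ (-d) := by
  have h1 : (0 : ℝ) < (x + 1) ^ 2 / 2 := by positivity
  have h2 : (x + 1) ^ 2 / 2 ≤ 1 + x ^ 2 := by nlinarith [sq_nonneg (x - 1)]
  have step1 : (1 + x ^ 2) ^ (-(d / 2)) ≤ ((x + 1) ^ 2 / 2) ^ (-(d / 2)) :=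
    Real.rpow_le_rpow_of_nonpos h1 h2 (by linarith)
  have e1 : ((x + 1) ^ 2 / 2 : ℝ) ^ (-(d / 2))
      = ((x + 1) ^ 2) ^ (-(d / 2)) / 2 ^ (-(d / 2)) :=
    Real.div_rpow (by positivity) (by norm_num) _
  have e2 : (((x + 1) ^ 2 : ℝ)) ^ (-(d / 2)) = (x + 1) ^ (-d) := by
    rw [← Real.rpow_natCast (x + 1) 2, ← Real.rpow_mul (by linarith)]
    congr 1
    push_cast
    ring
  have e3 : (2 : ℝ) ^ (-(d / 2)) = ((2 : ℝ) ^ (d / 2))⁻¹ :=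
    Real.rpow_neg (by norm_num) _
  have h5 : (2 : ℝ) ^ (d / 2) ≤ 2 := by
    calc (2 : ℝ) ^ (d / 2) ≤ (2 : ℝ) ^ (1 : ℝ) :=
          Real.rpow_le_rpow_of_exponent_le one_le_two (by linarith)
      _ = 2 := Real.rpow_one 2
  have h6 : (0 : ℝ) ≤ (x + 1) ^ (-d) := Real.rpow_nonneg (by linarith) _
  calc (1 + x ^ 2) ^ (-(d / 2)) ≤ ((x + 1) ^ 2 / 2) ^ (-(d / 2)) := step1
    _ = (x + 1) ^ (-d) * (2 : ℝ) ^ (d / 2) := by rw [e1, e2, e3, div_eq_mul_inv, inv_inv]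
    _ ≤ (x + 1) ^ (-d) * 2 := mul_le_mul_of_nonneg_left h5 h6
    _ = 2 * (x + 1) ^ (-d) := mul_comm _ _

/-- discrete Schur-type estimate, step (5.44). For `δ ∈ (1/2,1]` there is a
constant `C = C(δ)` such that for all nonnegative `ℓ²` sequences `a, b`:
`Σₙ ⟨n⟩^{-δ} aₙ (Σ_{m≤n} ⟨m+1⟩^{δ-1} bₘ) ≤ C ‖a‖_{ℓ²} ‖b‖_{ℓ²}`. -/
theorem stmt_10 (δ : ℝ) (hδ1 : 1 / 2 < δ) (hδ2 : δ ≤ 1) :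
    ∃ C : ℝ, 0 < C ∧ ∀ a b : ℕ → ℝ, (∀ n, 0 ≤ a n) → (∀ n, 0 ≤ b n) →
      Summable (fun n => a n ^ 2) → Summable (fun n => b n ^ 2) →
      ∀ M : ℕ,
        (∑ n ∈ Finset.range M,
          (1 + (n : ℝ) ^ 2) ^ (-(δ / 2)) * a n *
            ∑ m ∈ Finset.range (n + 1), (1 + ((m : ℝ) + 1) ^ 2) ^ ((δ - 1) / 2) * b m)
          ≤ C * Real.sqrt (∑' n, a n ^ 2) * Real.sqrt (∑' n, b n ^ 2) := by
  have hε : (0 : ℝ) < δ - 1 / 2 := by linarith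
  set ε : ℝ := δ - 1 / 2 with hεdef
  have hε1 : ε ≤ 1 / 2 := by rw [hεdef]; linarith
  set K : ℝ := 1 + 1 / ε with hKdef
  have hK1 : (1 : ℝ) ≤ K := by
    rw [hKdef]
    have : 0 < 1 / ε := by positivity
    linarith
  have hK0 : (0 : ℝ) < K := by linarith
  refine ⟨2 * Real.sqrt (2 * K) * Real.sqrt K, by positivity, ?_⟩
  intro a b ha hb hsa hsb M
  set R : ℕ → ℝ := fun n => ∑ m ∈ Finset.range (n + 1), ((m : ℝ) + 1) ^ ε * b m ^ 2
    with hRdef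
  have hRnonneg : ∀ n, 0 ≤ R n := fun n =>
    Finset.sum_nonneg fun m _ => by positivity
  have hposb : ∀ m : ℕ, (0 : ℝ) < 1 + ((m : ℝ) + 1) ^ 2 := fun m => by positivity
  have hTnonneg : ∀ n : ℕ,
      0 ≤ ∑ m ∈ Finset.range (n + 1), (1 + ((m : ℝ) + 1) ^ 2) ^ ((δ - 1) / 2) * b m :=
    fun n => Finset.sum_nonneg fun m _ =>
      mul_nonneg (Real.rpow_nonneg (hposb m).le _) (hb m)
  -- Step 1: inner sum bound via Cauchy-Schwarz
  have inner_bd : ∀ n : ℕ,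
      ∑ m ∈ Finset.range (n + 1), (1 + ((m : ℝ) + 1) ^ 2) ^ ((δ - 1) / 2) * b m
        ≤ Real.sqrt (2 * K) * (((n : ℝ) + 1) ^ (ε / 2) * Real.sqrt (R n)) := by
    intro n
    have CS := Finset.sum_sq_le_sum_mul_sum_of_sq_eq_mul (Finset.range (n + 1))
      (r := fun m => (1 + ((m : ℝ) + 1) ^ 2) ^ ((δ - 1) / 2) * b m)
      (f := fun m => (1 + ((m : ℝ) + 1) ^ 2) ^ ((δ - 3 / 2) / 2))
      (g := fun m => (1 + ((m : ℝ) + 1) ^ 2) ^ (ε / 2) * b m ^ 2)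
      (fun m _ => Real.rpow_nonneg (hposb m).le _)
      (fun m _ => mul_nonneg (Real.rpow_nonneg (hposb m).le _) (sq_nonneg _))
      (fun m _ => by
        rw [mul_pow, rpow_sq' (hposb m).le, ← mul_assoc, ← Real.rpow_add (hposb m)]
        congr 2
        rw [hεdef]
        ring)
    have hP : ∑ m ∈ Finset.range (n + 1), (1 + ((m : ℝ) + 1) ^ 2) ^ ((δ - 3 / 2) / 2)
        ≤ K * ((n : ℝ) + 1) ^ ε := by
      have he2 : δ - 3 / 2 + 1 = ε := by rw [hεdef]; ring
      calc ∑ m ∈ Finset.range (n + 1), (1 + ((m : ℝ) + 1) ^ 2) ^ ((δ - 3 / 2) / 2)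
          ≤ ∑ m ∈ Finset.range (n + 1), ((m : ℝ) + 1) ^ (δ - 3 / 2) :=
            Finset.sum_le_sum fun m _ => baseP (Nat.cast_nonneg m) (by linarith)
        _ ≤ (1 + 1 / (δ - 3 / 2 + 1)) * ((n + 1 : ℕ) : ℝ) ^ (δ - 3 / 2 + 1) :=
            helperA (by linarith) (by linarith) (n + 1)
        _ = K * ((n : ℝ) + 1) ^ ε := by rw [he2, hKdef]; push_cast; ring_nf
    have hQ : ∑ m ∈ Finset.range (n + 1), (1 + ((m : ℝ) + 1) ^ 2) ^ (ε / 2) * b m ^ 2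
        ≤ 2 * R n := by
      calc ∑ m ∈ Finset.range (n + 1), (1 + ((m : ℝ) + 1) ^ 2) ^ (ε / 2) * b m ^ 2
          ≤ ∑ m ∈ Finset.range (n + 1), 2 * (((m : ℝ) + 1) ^ ε * b m ^ 2) := by
            refine Finset.sum_le_sum fun m _ => ?_
            have h := baseQ (Nat.cast_nonneg m) hε.le (hε1.trans (by norm_num))
            have := mul_le_mul_of_nonneg_right h (sq_nonneg (b m))
            nlinarith [sq_nonneg (b m)]
        _ = 2 * R n := by rw [hRdef, Finset.mul_sum]
    have hQ0 : 0 ≤ ∑ m ∈ Finset.range (n + 1), (1 + ((m : ℝ) + 1) ^ 2) ^ (ε / 2) * b m ^ 2 :=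
      Finset.sum_nonneg fun m _ => mul_nonneg (Real.rpow_nonneg (hposb m).le _) (sq_nonneg _)
    have hKe : 0 ≤ K * ((n : ℝ) + 1) ^ ε := by positivity
    have hsq : (∑ m ∈ Finset.range (n + 1), (1 + ((m : ℝ) + 1) ^ 2) ^ ((δ - 1) / 2) * b m) ^ 2
        ≤ (Real.sqrt (2 * K) * (((n : ℝ) + 1) ^ (ε / 2) * Real.sqrt (R n))) ^ 2 := by
      have h1 : (∑ m ∈ Finset.range (n + 1),
          (1 + ((m : ℝ) + 1) ^ 2) ^ ((δ - 1) / 2) * b m) ^ 2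
          ≤ (K * ((n : ℝ) + 1) ^ ε) * (2 * R n) :=
        CS.trans (mul_le_mul hP hQ hQ0 hKe)
      have h2 : (Real.sqrt (2 * K) * (((n : ℝ) + 1) ^ (ε / 2) * Real.sqrt (R n))) ^ 2
          = (K * ((n : ℝ) + 1) ^ ε) * (2 * R n) := by
        rw [mul_pow, mul_pow, Real.sq_sqrt (by positivity : (0:ℝ) ≤ 2 * K),
          Real.sq_sqrt (hRnonneg n), rpow_sq' (by positivity : (0:ℝ) ≤ (n : ℝ) + 1)]
        have : 2 * (ε / 2) = ε := by ring
        rw [this]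
        ring
      rw [h2]
      exact h1
    exact le_of_sq_le_sq' hsq (by positivity)
  -- Step 2: termwise bound for the outer sum
  set v : ℕ → ℝ := fun n => ((n : ℝ) + 1) ^ (-(1 + ε) / 2) * Real.sqrt (R n) with hvdef
  have hvnonneg : ∀ n, 0 ≤ v n := fun n => by positivity
  have term_bd : ∀ n : ℕ,
      (1 + (n : ℝ) ^ 2) ^ (-(δ / 2)) * a n *
          ∑ m ∈ Finset.range (n + 1), (1 + ((m : ℝ) + 1) ^ 2) ^ ((δ - 1) / 2) * b m
        ≤ 2 * Real.sqrt (2 * K) * (a n * v n) := by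
    intro n
    have hout : (1 + (n : ℝ) ^ 2) ^ (-(δ / 2)) ≤ 2 * ((n : ℝ) + 1) ^ (-δ) :=
      baseOuter (Nat.cast_nonneg n) (by linarith) hδ2
    have hT := inner_bd n
    have e5 : ((n : ℝ) + 1) ^ (-δ) * ((n : ℝ) + 1) ^ (ε / 2) = ((n : ℝ) + 1) ^ (-(1 + ε) / 2) := by
      rw [← Real.rpow_add (by positivity)]
      congr 1
      rw [hεdef]
      ring
    calc (1 + (n : ℝ) ^ 2) ^ (-(δ / 2)) * a n *
          ∑ m ∈ Finset.range (n + 1), (1 + ((m : ℝ) + 1) ^ 2) ^ ((δ - 1) / 2) * b m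
        ≤ 2 * ((n : ℝ) + 1) ^ (-δ) * a n *
          ∑ m ∈ Finset.range (n + 1), (1 + ((m : ℝ) + 1) ^ 2) ^ ((δ - 1) / 2) * b m := by
          have := mul_le_mul_of_nonneg_right hout (ha n)
          exact mul_le_mul_of_nonneg_right this (hTnonneg n)
      _ ≤ 2 * ((n : ℝ) + 1) ^ (-δ) * a n *
          (Real.sqrt (2 * K) * (((n : ℝ) + 1) ^ (ε / 2) * Real.sqrt (R n))) := by
          exact mul_le_mul_of_nonneg_left hT
            (mul_nonneg (by positivity) (ha n))
      _ = 2 * Real.sqrt (2 * K) * (a n * v n) := by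
          rw [hvdef]
          simp only
          rw [← e5]
          ring
  -- Step 3: Cauchy-Schwarz in n
  have CS2 := Finset.sum_sq_le_sum_mul_sum_of_sq_eq_mul (Finset.range M)
    (r := fun n => a n * v n)
    (f := fun n => a n ^ 2)
    (g := fun n => ((n : ℝ) + 1) ^ (-(1 + ε)) * R n)
    (fun n _ => sq_nonneg _)
    (fun n _ => mul_nonneg (Real.rpow_nonneg (by positivity) _) (hRnonneg n))
    (fun n _ => by
      have h1 : v n ^ 2 = ((n : ℝ) + 1) ^ (-(1 + ε)) * R n := by
        rw [hvdef]
        simp only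
        rw [mul_pow, rpow_sq' (by positivity : (0:ℝ) ≤ (n : ℝ) + 1),
          Real.sq_sqrt (hRnonneg n),
          show (2 : ℝ) * (-(1 + ε) / 2) = -(1 + ε) from by ring]
      rw [mul_pow, h1])
  -- Step 4: swap the double sum
  have swap : ∑ n ∈ Finset.range M, ((n : ℝ) + 1) ^ (-(1 + ε)) * R n
      ≤ K * ∑ m ∈ Finset.range M, b m ^ 2 := by
    have e6 : ∑ n ∈ Finset.range M, ((n : ℝ) + 1) ^ (-(1 + ε)) * R n
        = ∑ m ∈ Finset.range M, ∑ n ∈ Finset.Ico m M,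
            ((n : ℝ) + 1) ^ (-(1 + ε)) * (((m : ℝ) + 1) ^ ε * b m ^ 2) := by
      simp only [hRdef, Finset.mul_sum]
      refine Finset.sum_comm' ?_
      intro n m
      simp only [Finset.mem_range, Finset.mem_Ico]
      omega
    rw [e6, Finset.mul_sum]
    refine Finset.sum_le_sum fun m _ => ?_
    rw [← Finset.sum_mul]
    have hB := helperB hε m M
    have hne : -(1 + ε) = -1 - ε := by ring
    rw [hne]
    have hmul := mul_le_mul_of_nonneg_right hB
      (mul_nonneg (Real.rpow_nonneg (by positivity : (0:ℝ) ≤ (m : ℝ) + 1) ε) (sq_nonneg (b m)))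
    refine hmul.trans_eq ?_
    rw [← hKdef]
    have : ((m : ℝ) + 1) ^ (-ε) * ((m : ℝ) + 1) ^ ε = 1 := by
      rw [← Real.rpow_add (by positivity)]
      norm_num
    calc K * ((m : ℝ) + 1) ^ (-ε) * (((m : ℝ) + 1) ^ ε * b m ^ 2)
        = K * (((m : ℝ) + 1) ^ (-ε) * ((m : ℝ) + 1) ^ ε) * b m ^ 2 := by ring
      _ = K * b m ^ 2 := by rw [this]; ring
  -- Step 5: assemble
  have hsum_a : ∑ n ∈ Finset.range M, a n ^ 2 ≤ ∑' n, a n ^ 2 :=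
    Summable.sum_le_tsum (Finset.range M) (fun n _ => sq_nonneg _) hsa
  have hsum_b : ∑ n ∈ Finset.range M, b n ^ 2 ≤ ∑' n, b n ^ 2 :=
    Summable.sum_le_tsum (Finset.range M) (fun n _ => sq_nonneg _) hsb
  have htsa : (0:ℝ) ≤ ∑' n, a n ^ 2 := tsum_nonneg fun n => sq_nonneg _
  have htsb : (0:ℝ) ≤ ∑' n, b n ^ 2 := tsum_nonneg fun n => sq_nonneg _
  have hr0 : 0 ≤ ∑ n ∈ Finset.range M, a n * v n :=
    Finset.sum_nonneg fun n _ => mul_nonneg (ha n) (hvnonneg n)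
  have hmid : ∑ n ∈ Finset.range M, a n * v n
      ≤ Real.sqrt (∑' n, a n ^ 2) * Real.sqrt (K * ∑' n, b n ^ 2) := by
    refine le_of_sq_le_sq' ?_ (by positivity)
    have h7 : (∑ n ∈ Finset.range M, a n * v n) ^ 2
        ≤ (∑' n, a n ^ 2) * (K * ∑' n, b n ^ 2) := by
      refine CS2.trans ?_
      have h8 : ∑ n ∈ Finset.range M, ((n : ℝ) + 1) ^ (-(1 + ε)) * R n
          ≤ K * ∑' n, b n ^ 2 := by
        refine swap.trans ?_
        exact mul_le_mul_of_nonneg_left hsum_b hK0.le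
      have h9 : 0 ≤ ∑ n ∈ Finset.range M, ((n : ℝ) + 1) ^ (-(1 + ε)) * R n :=
        Finset.sum_nonneg fun n _ =>
          mul_nonneg (Real.rpow_nonneg (by positivity) _) (hRnonneg n)
      exact mul_le_mul hsum_a h8 h9 htsa
    have h10 : (Real.sqrt (∑' n, a n ^ 2) * Real.sqrt (K * ∑' n, b n ^ 2)) ^ 2
        = (∑' n, a n ^ 2) * (K * ∑' n, b n ^ 2) := by
      rw [mul_pow, Real.sq_sqrt htsa, Real.sq_sqrt (by positivity)]
    rw [h10]
    exact h7
  calc ∑ n ∈ Finset.range M,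
        (1 + (n : ℝ) ^ 2) ^ (-(δ / 2)) * a n *
          ∑ m ∈ Finset.range (n + 1), (1 + ((m : ℝ) + 1) ^ 2) ^ ((δ - 1) / 2) * b m
      ≤ ∑ n ∈ Finset.range M, 2 * Real.sqrt (2 * K) * (a n * v n) :=
        Finset.sum_le_sum fun n _ => term_bd n
    _ = 2 * Real.sqrt (2 * K) * ∑ n ∈ Finset.range M, a n * v n := by
        rw [Finset.mul_sum]
    _ ≤ 2 * Real.sqrt (2 * K) *
        (Real.sqrt (∑' n, a n ^ 2) * Real.sqrt (K * ∑' n, b n ^ 2)) := by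
        refine mul_le_mul_of_nonneg_left hmid ?_
        positivity
    _ = 2 * Real.sqrt (2 * K) * Real.sqrt K * Real.sqrt (∑' n, a n ^ 2) *
        Real.sqrt (∑' n, b n ^ 2) := by
        rw [Real.sqrt_mul hK0.le]
        ring
end

section
/- Let H be a Hilbert space, A a selfadjoint operator on H with form domain issues ignored (A bounded suffices), and suppose F : (0, ε₀] → L(H) is a C¹ family of bounded operators satisfying ‖F(ε)‖ ≤ C/ε and ‖F'(ε)‖ ≤ C(ε^{δ-1} + ε^{-1/2}‖F(ε)‖ + ε^{δ-3/2}‖F(ε)‖^{1/2}) for all ε ∈ (0, ε₀], where δ ∈ (1/2, 1] and C > 0. Then sup_{ε ∈ (0, ε₀]} ‖F(ε)‖ < ∞, with a bound depending only on C, δ, ε₀. -/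
open MeasureTheory Set Real intervalIntegral

set_option maxHeartbeats 1000000

lemma rpow_le_aux17 {s e p q : ℝ} (hs : 0 < s) (hse : s ≤ e) (h : q ≤ p) :
    s ^ p ≤ e ^ (p - q) * s ^ q := by
  have h1 : s ^ p = s ^ (p - q) * s ^ q := by
    rw [← Real.rpow_add hs]; congr 1; ring
  rw [h1]
  exact mul_le_mul_of_nonneg_right (Real.rpow_le_rpow hs.le hse (by linarith))
    (Real.rpow_nonneg hs.le _)

lemma main_aux17 {E : Type*} [NormedAddCommGroup E] [NormedSpace ℝ E] [CompleteSpace E]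
    (F F' : ℝ → E) (a b A q : ℝ) (hab : a ≤ b) (h0 : 0 < a) (hq : q ≠ -1)
    (hder : ∀ x ∈ Set.Icc a b, HasDerivAt F (F' x) x)
    (hbound : ∀ x ∈ Set.Icc a b, ‖F' x‖ ≤ A * x ^ q) :
    ‖F a‖ ≤ ‖F b‖ + A * ((b ^ (q + 1) - a ^ (q + 1)) / (q + 1)) := by
  have hgc : ContinuousOn (fun s : ℝ => A * s ^ q) (Set.Icc a b) := by
    apply continuousOn_const.mul
    exact ContinuousOn.rpow_const continuousOn_id
      (fun x hx => Or.inl (ne_of_gt (lt_of_lt_of_le h0 hx.1)))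
  have hgInt : IntervalIntegrable (fun s : ℝ => A * s ^ q) volume a b :=
    hgc.intervalIntegrable_of_Icc hab
  have hmeas : AEStronglyMeasurable F' (volume.restrict (Set.Ioc a b)) := by
    apply (stronglyMeasurable_deriv F).aestronglyMeasurable.congr
    exact (ae_restrict_iff' measurableSet_Ioc).2
      (ae_of_all _ fun x hx => ((hder x (Set.Ioc_subset_Icc_self hx)).deriv))
  have hInt : IntervalIntegrable F' volume a b := by
    rw [intervalIntegrable_iff_integrableOn_Ioc_of_le hab]
    refine Integrable.mono' ((intervalIntegrable_iff_integrableOn_Ioc_of_le hab).1 hgInt)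
      hmeas ?_
    exact (ae_restrict_iff' measurableSet_Ioc).2
      (ae_of_all _ fun x hx => hbound x (Set.Ioc_subset_Icc_self hx))
  have hftc : ∫ x in a..b, F' x = F b - F a :=
    intervalIntegral.integral_eq_sub_of_hasDerivAt
      (fun x hx => hder x (by rwa [Set.uIcc_of_le hab] at hx)) hInt
  have h1 : ‖F a‖ ≤ ‖F b‖ + ‖∫ x in a..b, F' x‖ := by
    rw [hftc]
    calc ‖F a‖ = ‖F b - (F b - F a)‖ := by rw [sub_sub_cancel]
      _ ≤ ‖F b‖ + ‖F b - F a‖ := norm_sub_le _ _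
  have h2 : ‖∫ x in a..b, F' x‖ ≤ ∫ x in a..b, A * x ^ q := by
    have habs := intervalIntegral.norm_integral_le_abs_of_norm_le (f := F')
      (g := fun x : ℝ => A * x ^ q) (μ := volume) (a := a) (b := b) (by
        rw [Set.uIoc_of_le hab]
        exact (ae_restrict_iff' measurableSet_Ioc).2
          (ae_of_all _ fun x hx => hbound x (Set.Ioc_subset_Icc_self hx))) hgInt
    have hpos : (0:ℝ) ≤ ∫ x in a..b, A * x ^ q :=
      intervalIntegral.integral_nonneg hab
        (fun x hx => le_trans (norm_nonneg _) (hbound x hx))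
    rwa [abs_of_nonneg hpos] at habs
  have h3 : (∫ x in a..b, A * x ^ q) = A * ((b ^ (q + 1) - a ^ (q + 1)) / (q + 1)) := by
    rw [intervalIntegral.integral_const_mul, integral_rpow (Or.inr ⟨hq, by
      rw [Set.uIcc_of_le hab]; intro h; exact absurd h0 (by simp at h; linarith [h.1])⟩)]
  linarith [h1, h2, h3.le, h3.ge]

lemma ptbound17 {C δ α q K e s nF nF' : ℝ} (hs0 : 0 < s) (hse : s ≤ e)
    (hC : 0 ≤ C) (hK : 0 ≤ K)
    (h3 : nF' ≤ C * (s ^ (δ - 1) + s ^ (-(1 / 2 : ℝ)) * nF +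
      s ^ (δ - 3 / 2) * Real.sqrt nF))
    (hF : nF ≤ K * s ^ (-α))
    (hq1 : q ≤ δ - 1) (hq2 : q ≤ -(1 / 2 : ℝ) - α) (hq3 : q ≤ δ - 3 / 2 - α / 2) :
    nF' ≤ (C * (e ^ (δ - 1 - q) + K * e ^ (-(1 / 2 : ℝ) - α - q) +
      Real.sqrt K * e ^ (δ - 3 / 2 - α / 2 - q))) * s ^ q := by
  have hsq : Real.sqrt nF ≤ Real.sqrt K * s ^ (-(α / 2)) := by
    calc Real.sqrt nF ≤ Real.sqrt (K * s ^ (-α)) := Real.sqrt_le_sqrt hF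
      _ = Real.sqrt K * s ^ (-(α / 2)) := by
          rw [Real.sqrt_mul hK, Real.sqrt_eq_rpow (s ^ (-α)), ← Real.rpow_mul hs0.le]
          congr 1; ring
  have t1 : s ^ (δ - 1) ≤ e ^ (δ - 1 - q) * s ^ q := rpow_le_aux17 hs0 hse hq1
  have t2 : s ^ (-(1 / 2 : ℝ)) * nF ≤ K * (e ^ (-(1 / 2 : ℝ) - α - q) * s ^ q) := by
    calc s ^ (-(1 / 2 : ℝ)) * nF ≤ s ^ (-(1 / 2 : ℝ)) * (K * s ^ (-α)) :=
          mul_le_mul_of_nonneg_left hF (Real.rpow_nonneg hs0.le _)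
      _ = K * s ^ (-(1 / 2 : ℝ) - α) := by
          rw [show s ^ (-(1 / 2 : ℝ)) * (K * s ^ (-α)) = K * (s ^ (-(1 / 2 : ℝ)) * s ^ (-α)) by ring,
            ← Real.rpow_add hs0]
          congr 1
      _ ≤ K * (e ^ (-(1 / 2 : ℝ) - α - q) * s ^ q) :=
          mul_le_mul_of_nonneg_left (rpow_le_aux17 hs0 hse hq2) hK
  have t3 : s ^ (δ - 3 / 2) * Real.sqrt nF ≤
      Real.sqrt K * (e ^ (δ - 3 / 2 - α / 2 - q) * s ^ q) := by
    calc s ^ (δ - 3 / 2) * Real.sqrt nF ≤ s ^ (δ - 3 / 2) * (Real.sqrt K * s ^ (-(α / 2))) :=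
          mul_le_mul_of_nonneg_left hsq (Real.rpow_nonneg hs0.le _)
      _ = Real.sqrt K * s ^ (δ - 3 / 2 - α / 2) := by
          rw [show s ^ (δ - 3 / 2) * (Real.sqrt K * s ^ (-(α / 2))) =
            Real.sqrt K * (s ^ (δ - 3 / 2) * s ^ (-(α / 2))) by ring, ← Real.rpow_add hs0]
          congr 1
      _ ≤ Real.sqrt K * (e ^ (δ - 3 / 2 - α / 2 - q) * s ^ q) :=
          mul_le_mul_of_nonneg_left (rpow_le_aux17 hs0 hse hq3) (Real.sqrt_nonneg _)
  calc nF' ≤ C * (s ^ (δ - 1) + s ^ (-(1 / 2 : ℝ)) * nF + s ^ (δ - 3 / 2) * Real.sqrt nF) := h3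
    _ ≤ C * (e ^ (δ - 1 - q) * s ^ q + K * (e ^ (-(1 / 2 : ℝ) - α - q) * s ^ q) +
        Real.sqrt K * (e ^ (δ - 3 / 2 - α / 2 - q) * s ^ q)) :=
        mul_le_mul_of_nonneg_left (add_le_add (add_le_add t1 t2) t3) hC
    _ = (C * (e ^ (δ - 1 - q) + K * e ^ (-(1 / 2 : ℝ) - α - q) +
        Real.sqrt K * e ^ (δ - 3 / 2 - α / 2 - q))) * s ^ q := by ring

/-- differential-inequality bootstrap, Lemma 3.3 of [JMP84].
If a `C¹` family `F : (0, ε₀] → L(H)` satisfies `‖F(ε)‖ ≤ C/ε` and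
`‖F'(ε)‖ ≤ C (ε^{δ-1} + ε^{-1/2} ‖F(ε)‖ + ε^{δ-3/2} ‖F(ε)‖^{1/2})` with `δ ∈ (1/2, 1]`,
then `‖F(ε)‖` is bounded uniformly in `ε`, with a bound depending only on `C, δ, ε₀`. -/
theorem stmt_17 {H : Type*} [NormedAddCommGroup H] [InnerProductSpace ℂ H] [CompleteSpace H]
    (δ C ε₀ : ℝ) (hδ : δ ∈ Set.Ioc (1 / 2 : ℝ) 1) (hC : 0 < C) (hε₀ : 0 < ε₀) :
    ∃ M : ℝ, ∀ F F' : ℝ → (H →L[ℂ] H),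
      (∀ ε ∈ Set.Ioc (0 : ℝ) ε₀, HasDerivAt F (F' ε) ε) →
      (∀ ε ∈ Set.Ioc (0 : ℝ) ε₀, ‖F ε‖ ≤ C / ε) →
      (∀ ε ∈ Set.Ioc (0 : ℝ) ε₀, ‖F' ε‖ ≤
        C * (ε ^ (δ - 1) + ε ^ (-(1 / 2 : ℝ)) * ‖F ε‖ +
          ε ^ (δ - 3 / 2) * Real.sqrt ‖F ε‖)) →
      ∀ ε ∈ Set.Ioc (0 : ℝ) ε₀, ‖F ε‖ ≤ M := by
  obtain ⟨hδ1, hδ2⟩ := hδ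
  set θ : ℝ := (2 * δ - 1) / 4 with hθdef
  have hθpos : 0 < θ := by rw [hθdef]; linarith
  have hθle : θ ≤ 1 / 4 := by rw [hθdef]; linarith
  have h4θ : 4 * θ = 2 * δ - 1 := by rw [hθdef]; ring
  -- one improvement step
  have improve : ∀ α β K : ℝ, 0 ≤ K → 0 < β → α - 1 / 2 ≤ β → α / 2 + 1 / 2 - δ ≤ β →
      ∃ K', 0 ≤ K' ∧ ∀ F F' : ℝ → (H →L[ℂ] H),
        (∀ ε ∈ Set.Ioc (0 : ℝ) ε₀, HasDerivAt F (F' ε) ε) →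
        (∀ ε ∈ Set.Ioc (0 : ℝ) ε₀, ‖F ε‖ ≤ C / ε) →
        (∀ ε ∈ Set.Ioc (0 : ℝ) ε₀, ‖F' ε‖ ≤
          C * (ε ^ (δ - 1) + ε ^ (-(1 / 2 : ℝ)) * ‖F ε‖ +
            ε ^ (δ - 3 / 2) * Real.sqrt ‖F ε‖)) →
        (∀ ε ∈ Set.Ioc (0 : ℝ) ε₀, ‖F ε‖ ≤ K * ε ^ (-α)) →
        ∀ ε ∈ Set.Ioc (0 : ℝ) ε₀, ‖F ε‖ ≤ K' * ε ^ (-β) := by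
    intro α β K hK hβ hc1 hc2
    set q : ℝ := -1 - β with hqdef
    set A : ℝ := C * (ε₀ ^ (δ - 1 - q) + K * ε₀ ^ (-(1 / 2 : ℝ) - α - q) +
      Real.sqrt K * ε₀ ^ (δ - 3 / 2 - α / 2 - q)) with hAdef
    have hA : 0 ≤ A := by
      refine mul_nonneg hC.le ?_
      exact add_nonneg (add_nonneg (Real.rpow_nonneg hε₀.le _)
        (mul_nonneg hK (Real.rpow_nonneg hε₀.le _)))
        (mul_nonneg (Real.sqrt_nonneg _) (Real.rpow_nonneg hε₀.le _))
    have hK'0 : 0 ≤ C / ε₀ * ε₀ ^ β + A / β :=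
      add_nonneg (mul_nonneg (div_nonneg hC.le hε₀.le) (Real.rpow_nonneg hε₀.le _))
        (div_nonneg hA hβ.le)
    refine ⟨C / ε₀ * ε₀ ^ β + A / β, hK'0, ?_⟩
    intro F F' hD hB hDB hKb ε hε
    obtain ⟨hε1, hε2⟩ := hε
    have hqne : q ≠ -1 := by rw [hqdef]; intro h; exact hβ.ne' (by linarith)
    have key := main_aux17 F F' ε ε₀ A q hε2 hε1 hqne
      (fun x hx => hD x ⟨lt_of_lt_of_le hε1 hx.1, hx.2⟩)
      (fun x hx => by
        have hx0 : 0 < x := lt_of_lt_of_le hε1 hx.1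
        have hxm : x ∈ Set.Ioc (0 : ℝ) ε₀ := ⟨hx0, hx.2⟩
        rw [hAdef]
        exact ptbound17 hx0 hx.2 hC.le hK (hDB x hxm) (hKb x hxm)
          (by rw [hqdef]; linarith) (by rw [hqdef]; linarith) (by rw [hqdef]; linarith))
    have hq1 : q + 1 = -β := by rw [hqdef]; ring
    rw [hq1] at key
    have hFb : ‖F ε₀‖ ≤ C / ε₀ := hB ε₀ ⟨hε₀, le_refl _⟩
    have hone : 1 ≤ ε₀ ^ β * ε ^ (-β) := by
      have h1 : ε ^ (-β) = (ε ^ β)⁻¹ := Real.rpow_neg hε1.le β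
      have h2 : (ε₀ / ε) ^ β = ε₀ ^ β * (ε ^ β)⁻¹ := by
        rw [Real.div_rpow hε₀.le hε1.le, div_eq_mul_inv]
      rw [h1, ← h2]
      calc (1 : ℝ) = 1 ^ β := (Real.one_rpow β).symm
        _ ≤ (ε₀ / ε) ^ β :=
            Real.rpow_le_rpow zero_le_one ((one_le_div hε1).2 hε2) hβ.le
    have e1 : A * ((ε₀ ^ (-β) - ε ^ (-β)) / (-β)) = A / β * (ε ^ (-β) - ε₀ ^ (-β)) := by
      rw [div_neg]
      ring
    calc ‖F ε‖ ≤ ‖F ε₀‖ + A * ((ε₀ ^ (-β) - ε ^ (-β)) / (-β)) := key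
      _ ≤ C / ε₀ + A / β * (ε ^ (-β) - ε₀ ^ (-β)) := add_le_add hFb (le_of_eq e1)
      _ ≤ C / ε₀ * ε₀ ^ β * ε ^ (-β) + A / β * ε ^ (-β) := by
          have hCd : 0 ≤ C / ε₀ := div_nonneg hC.le hε₀.le
          have hAβ : 0 ≤ A / β := div_nonneg hA hβ.le
          have h2 : C / ε₀ ≤ C / ε₀ * ε₀ ^ β * ε ^ (-β) := by
            nlinarith [mul_le_mul_of_nonneg_left hone hCd]
          have h3 : A / β * (ε ^ (-β) - ε₀ ^ (-β)) ≤ A / β * ε ^ (-β) := by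
            nlinarith [Real.rpow_nonneg hε₀.le (-β), hAβ]
          linarith
      _ = (C / ε₀ * ε₀ ^ β + A / β) * ε ^ (-β) := by ring
  -- iterate
  have iter : ∀ n : ℕ, ∃ K, 0 ≤ K ∧ ∀ F F' : ℝ → (H →L[ℂ] H),
      (∀ ε ∈ Set.Ioc (0 : ℝ) ε₀, HasDerivAt F (F' ε) ε) →
      (∀ ε ∈ Set.Ioc (0 : ℝ) ε₀, ‖F ε‖ ≤ C / ε) →
      (∀ ε ∈ Set.Ioc (0 : ℝ) ε₀, ‖F' ε‖ ≤
        C * (ε ^ (δ - 1) + ε ^ (-(1 / 2 : ℝ)) * ‖F ε‖ +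
          ε ^ (δ - 3 / 2) * Real.sqrt ‖F ε‖)) →
      ∀ ε ∈ Set.Ioc (0 : ℝ) ε₀, ‖F ε‖ ≤ K * ε ^ (-(max (1 - (n : ℝ) * θ) θ)) := by
    intro n
    induction n with
    | zero =>
      refine ⟨C, hC.le, fun F F' hD hB hDB ε hε => ?_⟩
      have hm : max (1 - ((0 : ℕ) : ℝ) * θ) θ = 1 := by
        push_cast; rw [zero_mul, sub_zero]; exact max_eq_left (by linarith)
      rw [hm, show ε ^ (-(1 : ℝ)) = ε⁻¹ by rw [Real.rpow_neg hε.1.le, Real.rpow_one],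
        ← div_eq_mul_inv]
      exact hB ε hε
    | succ n ih =>
      obtain ⟨K, hK, hKb⟩ := ih
      have hα0 : (0 : ℝ) ≤ max (1 - (n : ℝ) * θ) θ := le_trans hθpos.le (le_max_right _ _)
      have hstep : max (1 - (n : ℝ) * θ) θ - θ ≤ max (1 - ((n + 1 : ℕ) : ℝ) * θ) θ := by
        push_cast
        rcases le_total (1 - (n : ℝ) * θ) θ with h | h
        · rw [max_eq_right h]
          have := le_max_right (1 - ((n : ℝ) + 1) * θ) θ
          linarith
        · rw [max_eq_left h]
          have := le_max_left (1 - ((n : ℝ) + 1) * θ) θ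
          linarith
      obtain ⟨K', hK', himp⟩ := improve (max (1 - (n : ℝ) * θ) θ)
        (max (1 - ((n + 1 : ℕ) : ℝ) * θ) θ) K hK
        (lt_of_lt_of_le hθpos (le_max_right _ _))
        (by linarith)
        (by linarith)
      exact ⟨K', hK', fun F F' hD hB hDB => himp F F' hD hB hDB (hKb F F' hD hB hDB)⟩
  obtain ⟨n, hn⟩ := exists_nat_ge ((1 - θ) / θ)
  have hmax : max (1 - (n : ℝ) * θ) θ = θ := by
    refine max_eq_right ?_
    have := (div_le_iff₀ hθpos).1 hn
    linarith
  obtain ⟨K, hK, hKb⟩ := iter n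
  rw [hmax] at hKb
  -- final step
  set ρ : ℝ := min δ (min (1 / 2 - θ) (δ - 1 / 2 - θ / 2)) with hρdef
  have hρpos : 0 < ρ :=
    lt_min (by linarith) (lt_min (by linarith) (by linarith))
  have hρ1 : ρ ≤ δ := min_le_left _ _
  have hρ2 : ρ ≤ 1 / 2 - θ := le_trans (min_le_right _ _) (min_le_left _ _)
  have hρ3 : ρ ≤ δ - 1 / 2 - θ / 2 := le_trans (min_le_right _ _) (min_le_right _ _)
  set q : ℝ := ρ - 1 with hqdef
  set A' : ℝ := C * (ε₀ ^ (δ - 1 - q) + K * ε₀ ^ (-(1 / 2 : ℝ) - θ - q) +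
    Real.sqrt K * ε₀ ^ (δ - 3 / 2 - θ / 2 - q)) with hAdef
  have hA' : 0 ≤ A' := by
    refine mul_nonneg hC.le ?_
    exact add_nonneg (add_nonneg (Real.rpow_nonneg hε₀.le _)
      (mul_nonneg hK (Real.rpow_nonneg hε₀.le _)))
      (mul_nonneg (Real.sqrt_nonneg _) (Real.rpow_nonneg hε₀.le _))
  refine ⟨C / ε₀ + A' * (ε₀ ^ ρ / ρ), ?_⟩
  intro F F' hD hB hDB ε hε
  obtain ⟨hε1, hε2⟩ := hε
  have hqne : q ≠ -1 := by rw [hqdef]; intro h; exact hρpos.ne' (by linarith)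
  have key := main_aux17 F F' ε ε₀ A' q hε2 hε1 hqne
    (fun x hx => hD x ⟨lt_of_lt_of_le hε1 hx.1, hx.2⟩)
    (fun x hx => by
      have hx0 : 0 < x := lt_of_lt_of_le hε1 hx.1
      have hxm : x ∈ Set.Ioc (0 : ℝ) ε₀ := ⟨hx0, hx.2⟩
      rw [hAdef]
      exact ptbound17 hx0 hx.2 hC.le hK (hDB x hxm) (hKb F F' hD hB hDB x hxm)
        (by rw [hqdef]; linarith) (by rw [hqdef]; linarith) (by rw [hqdef]; linarith))
  have hq1 : q + 1 = ρ := by rw [hqdef]; ring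
  rw [hq1] at key
  have hFb : ‖F ε₀‖ ≤ C / ε₀ := hB ε₀ ⟨hε₀, le_refl _⟩
  have hlast : A' * ((ε₀ ^ ρ - ε ^ ρ) / ρ) ≤ A' * (ε₀ ^ ρ / ρ) := by
    refine mul_le_mul_of_nonneg_left ?_ hA'
    have h1 : (0 : ℝ) ≤ ε ^ ρ := Real.rpow_nonneg hε1.le ρ
    exact (div_le_div_iff_of_pos_right hρpos).2 (by linarith)
  linarith [key, hFb, hlast]
end
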